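/- Under the same setting, the variance of the sampled decoupled loss φ(f_y(x)) + Σ_{i=1}^m w_{y,s_i}·φ̃(-f_{s_i}(x)) over N ~ q^m equals Σ_{y'≠y} w_{yy'}·ρ_{yy'}·φ̃(-f_{y'}(x))² − (1/m)·(Σ_{y'≠y} ρ_{yy'}·φ̃(-f_{y'}(x)))², where ρ_{yy'} = m·w_{yy'}·q_{y'}. -/

import Mathlib

open Finset

section aux
variable {L m : ℕ}

lemma sum_pi_prod (B : Fin m → Fin L → ℝ) :
    ∑ N : Fin m → Fin L, ∏ k, B k (N k) = ∏ k, ∑ y', B k y' := by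
  rw [Finset.prod_univ_sum, Fintype.piFinset_univ]

lemma key0 (q : Fin L → ℝ) (hq1 : ∑ y', q y' = 1) :
    ∑ N : Fin m → Fin L, ∏ k, q (N k) = 1 := by
  rw [sum_pi_prod (fun _ y' => q y')]; simp [hq1]

lemma key1 (q g : Fin L → ℝ) (hq1 : ∑ y', q y' = 1) (i : Fin m) :
    ∑ N : Fin m → Fin L, (∏ k, q (N k)) * g (N i) = ∑ y', q y' * g y' := by
  have h1 : ∀ N : Fin m → Fin L, (∏ k, q (N k)) * g (N i)
      = ∏ k, (q (N k) * (if k = i then g (N k) else 1)) := by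
    intro N
    rw [Finset.prod_mul_distrib, Finset.prod_ite_eq' univ i (fun k => g (N k)),
      if_pos (mem_univ i)]
  simp_rw [h1]
  rw [sum_pi_prod (fun k y' => q y' * (if k = i then g y' else 1)),
    Finset.prod_eq_single i]
  · simp
  · intro k _ hk; simp [hk, hq1]
  · simp

lemma key2 (q g : Fin L → ℝ) (hq1 : ∑ y', q y' = 1) (i j : Fin m) :
    ∑ N : Fin m → Fin L, (∏ k, q (N k)) * g (N i) * g (N j)
      = if i = j then ∑ y', q y' * g y' ^ 2 else (∑ y', q y' * g y') ^ 2 := by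
  have h1 : ∀ N : Fin m → Fin L, (∏ k, q (N k)) * g (N i) * g (N j)
      = ∏ k, (q (N k) * (if k = i then g (N k) else 1) * (if k = j then g (N k) else 1)) := by
    intro N
    rw [Finset.prod_mul_distrib, Finset.prod_mul_distrib,
      Finset.prod_ite_eq' univ i (fun k => g (N k)),
      Finset.prod_ite_eq' univ j (fun k => g (N k)),
      if_pos (mem_univ i), if_pos (mem_univ j)]
  simp_rw [h1]
  rw [sum_pi_prod (fun k y' => q y' * (if k = i then g y' else 1) * (if k = j then g y' else 1))]
  by_cases hij : i = j
  · subst hij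
    rw [if_pos rfl, Finset.prod_eq_single i]
    · simp [pow_two, mul_assoc]
    · intro k _ hk; simp [hk, hq1]
    · simp
  · rw [if_neg hij]
    have h2 : ∀ k : Fin m,
        (∑ y', q y' * (if k = i then g y' else 1) * (if k = j then g y' else 1))
        = (if k = i then ∑ y', q y' * g y' else 1) * (if k = j then ∑ y', q y' * g y' else 1) := by
      intro k
      by_cases hki : k = i
      · subst hki; simp [hij]
      · by_cases hkj : k = j
        · subst hkj; simp [hki]
        · simp [hki, hkj, hq1]
    simp_rw [h2]
    rw [Finset.prod_mul_distrib, Finset.prod_ite_eq' univ i, Finset.prod_ite_eq' univ j,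
      if_pos (mem_univ i), if_pos (mem_univ j), pow_two]

end aux

/-- Variance of the sampled decoupled loss over i.i.d. negatives `N ~ q^m`. -/
theorem variance_sampled_decoupled_loss {L m : ℕ} (hm : 0 < m) (y : Fin L)
    (f : Fin L → ℝ) (q w : Fin L → ℝ) (φ ψ : ℝ → ℝ)
    (hq0 : ∀ y', 0 ≤ q y') (hq1 : ∑ y', q y' = 1) (hqy : q y = 0)
    (hw : ∀ y', 0 ≤ w y') (hφ : ∀ t, 0 ≤ φ t) (hψ : ∀ t, 0 ≤ ψ t) :
    (∑ N : Fin m → Fin L, (∏ i, q (N i)) *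
        (φ (f y) + ∑ i, w (N i) * ψ (-(f (N i)))) ^ 2)
      - (∑ N : Fin m → Fin L, (∏ i, q (N i)) *
        (φ (f y) + ∑ i, w (N i) * ψ (-(f (N i))))) ^ 2
    = (∑ y' ∈ univ \ {y}, w y' * ((m : ℝ) * w y' * q y') * ψ (-(f y')) ^ 2)
      - (1 / (m : ℝ)) *
        (∑ y' ∈ univ \ {y}, ((m : ℝ) * w y' * q y') * ψ (-(f y'))) ^ 2 := by
  set c : ℝ := φ (f y) with hc
  set g : Fin L → ℝ := fun y' => w y' * ψ (-(f y')) with hg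
  set μ1 : ℝ := ∑ y', q y' * g y' with hμ1
  set μ2 : ℝ := ∑ y', q y' * g y' ^ 2 with hμ2
  have hmne : (m : ℝ) ≠ 0 := Nat.cast_ne_zero.mpr hm.ne'
  -- first moment of S
  have E1 : ∑ N : Fin m → Fin L, (∏ k, q (N k)) * (∑ i, g (N i)) = (m : ℝ) * μ1 := by
    simp_rw [Finset.mul_sum]
    rw [Finset.sum_comm]
    simp_rw [key1 q g hq1]
    simp [mul_comm]
    exact Or.inl rfl
  -- second moment of S
  have E2 : ∑ N : Fin m → Fin L, (∏ k, q (N k)) * (∑ i, g (N i)) ^ 2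
      = (m : ℝ) * μ2 + ((m : ℝ) ^ 2 - m) * μ1 ^ 2 := by
    have hsq : ∀ N : Fin m → Fin L,
        (∏ k, q (N k)) * (∑ i, g (N i)) ^ 2
        = ∑ i, ∑ j, (∏ k, q (N k)) * g (N i) * g (N j) := by
      intro N
      rw [pow_two, Finset.sum_mul_sum, Finset.mul_sum]
      congr 1; ext i
      rw [Finset.mul_sum]
      congr 1; ext j
      ring
    simp_rw [hsq]
    rw [Finset.sum_comm]
    have : ∀ i : Fin m, ∑ N : Fin m → Fin L, ∑ j, (∏ k, q (N k)) * g (N i) * g (N j)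
        = ∑ j, if i = j then μ2 else μ1 ^ 2 := by
      intro i
      rw [Finset.sum_comm]
      exact Finset.sum_congr rfl fun j _ => key2 q g hq1 i j
    simp_rw [this]
    have : ∀ i : Fin m, (∑ j, if i = j then μ2 else μ1 ^ 2)
        = μ2 + ((m : ℝ) - 1) * μ1 ^ 2 := by
      intro i
      have : ∀ j : Fin m, (if i = j then μ2 else μ1 ^ 2)
          = μ1 ^ 2 + (if j = i then μ2 - μ1 ^ 2 else 0) := by
        intro j
        by_cases h : i = j
        · subst h; simp
        · simp [h, Ne.symm h]
      simp_rw [this]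
      rw [Finset.sum_add_distrib, Finset.sum_ite_eq' univ i, if_pos (mem_univ i)]
      simp [Finset.card_univ]
      ring
    simp_rw [this]
    simp [Finset.card_univ]
    ring
  -- expand the square
  have LHS1 : ∑ N : Fin m → Fin L, (∏ k, q (N k)) * (c + ∑ i, g (N i)) ^ 2
      = c ^ 2 + 2 * c * ((m : ℝ) * μ1) + ((m : ℝ) * μ2 + ((m : ℝ) ^ 2 - m) * μ1 ^ 2) := by
    have : ∀ N : Fin m → Fin L, (∏ k, q (N k)) * (c + ∑ i, g (N i)) ^ 2
        = (∏ k, q (N k)) * c ^ 2 + 2 * c * ((∏ k, q (N k)) * (∑ i, g (N i)))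
          + (∏ k, q (N k)) * (∑ i, g (N i)) ^ 2 := by
      intro N; ring
    simp_rw [this]
    rw [Finset.sum_add_distrib, Finset.sum_add_distrib, ← Finset.sum_mul, ← Finset.mul_sum,
      key0 q hq1, E1, E2]
    ring
  have LHS2 : ∑ N : Fin m → Fin L, (∏ k, q (N k)) * (c + ∑ i, g (N i))
      = c + (m : ℝ) * μ1 := by
    have : ∀ N : Fin m → Fin L, (∏ k, q (N k)) * (c + ∑ i, g (N i))
        = (∏ k, q (N k)) * c + (∏ k, q (N k)) * (∑ i, g (N i)) := by
      intro N; ring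
    simp_rw [this]
    rw [Finset.sum_add_distrib, ← Finset.sum_mul, key0 q hq1, E1]
    ring
  rw [LHS1, LHS2]
  -- RHS: extend sums over univ \ {y} to univ
  have hR1 : ∑ y' ∈ univ \ {y}, w y' * ((m : ℝ) * w y' * q y') * ψ (-(f y')) ^ 2
      = (m : ℝ) * μ2 := by
    rw [Finset.sum_sdiff_eq_sub (Finset.subset_univ _), Finset.sum_singleton, hqy]
    rw [hμ2, Finset.mul_sum]
    simp only [hg]
    rw [sub_eq_iff_eq_add]
    simp only [mul_zero, zero_mul, add_zero]
    exact Finset.sum_congr rfl fun y' _ => by ring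
  have hR2 : ∑ y' ∈ univ \ {y}, ((m : ℝ) * w y' * q y') * ψ (-(f y'))
      = (m : ℝ) * μ1 := by
    rw [Finset.sum_sdiff_eq_sub (Finset.subset_univ _), Finset.sum_singleton, hqy]
    rw [hμ1, Finset.mul_sum]
    simp only [hg]
    rw [sub_eq_iff_eq_add]
    simp only [mul_zero, zero_mul, add_zero]
    exact Finset.sum_congr rfl fun y' _ => by ring
  rw [hR1, hR2]
  field_simp
  ring
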